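/- Suppose X : ℝ → ℂ is measurable and there exist C, M > 0 with ∫ ω^{2k} |X(ω)|² dω ≤ C^k M for all even k ≥ 0. Then for every T with 4T² < 1/C, ∫ e^{2T|ω|} |X(ω)|² dω < ∞. -/

import Mathlib

open MeasureTheory Real

theorem moment_bounds_imply_exp_decay (X : ℝ → ℂ) (C M : ℝ) (hC : 0 < C) (hM : 0 < M)
    (hmeas : Measurable X)
    (hint : ∀ k : ℕ, Even k → Integrable (fun ω : ℝ => ω ^ (2 * k) * (‖X ω‖) ^ 2))
    (hbd : ∀ k : ℕ, Even k → (∫ ω : ℝ, ω ^ (2 * k) * (‖X ω‖) ^ 2) ≤ C ^ k * M) :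
    ∀ T : ℝ, 0 < T → 4 * T ^ 2 < 1 / C →
      Integrable (fun ω : ℝ => Real.exp (2 * T * |ω|) * (‖X ω‖) ^ 2) := by
  intro T hT _
  -- notation
  set A : ℝ → ℝ := fun ω => (‖X ω‖) ^ 2 with hA
  have hA_nonneg : ∀ ω, 0 ≤ A ω := fun ω => sq_nonneg _
  have hA_meas : Measurable A := by
    have : A = fun ω => ‖X ω‖ ^ 2 := by funext ω; rw [hA]
    rw [this]; exact hmeas.norm.pow_const 2
  -- the summands
  set h : ℕ → ℝ → ℝ := fun n ω => (2 * T * |ω|) ^ n / (n.factorial : ℝ) * A ω with hh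
  have hh_nonneg : ∀ n ω, 0 ≤ h n ω := by
    intro n ω
    apply mul_nonneg (div_nonneg (pow_nonneg (by positivity) n) (by positivity)) (hA_nonneg ω)
  have hh_meas : ∀ n, Measurable (h n) := by
    intro n
    exact (((measurable_const.mul (measurable_abs)).pow_const n).div_const _).mul hA_meas
  -- dominating integrable function for each n
  have hdom : ∀ n : ℕ, Integrable (fun ω : ℝ => (2 * T) ^ n / (n.factorial : ℝ) * ((1 + ω ^ (2 * (2 * n))) * A ω)) := by
    intro n
    apply Integrable.const_mul
    have h0 := hint 0 (Even.zero)
    have h2n := hint (2 * n) (even_two_mul n)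
    simp only [mul_zero, pow_zero, one_mul] at h0
    have := (h0.add h2n)
    refine this.congr (by
      filter_upwards with ω
      simp only [Pi.add_apply, hA]
      ring)
  have habs_pow_le : ∀ (n : ℕ) (ω : ℝ), |ω| ^ n ≤ 1 + ω ^ (2 * (2 * n)) := by
    intro n ω
    rcases le_total (|ω|) 1 with hle | hle
    · have : |ω| ^ n ≤ 1 := pow_le_one₀ (abs_nonneg ω) hle
      have h2 : 0 ≤ ω ^ (2 * (2 * n)) := (even_two_mul (2*n)).pow_nonneg ω
      linarith
    · have h1 : |ω| ^ n ≤ |ω| ^ (2 * (2 * n)) := pow_le_pow_right₀ hle (by omega)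
      have h2 : |ω| ^ (2 * (2 * n)) = ω ^ (2 * (2 * n)) := by
        rw [← abs_pow, abs_of_nonneg ((even_two_mul (2*n)).pow_nonneg ω)]
      linarith [h1, h2 ▸ h1]
  have hh_int : ∀ n, Integrable (h n) := by
    intro n
    refine (hdom n).mono ((hh_meas n).aestronglyMeasurable) ?_
    filter_upwards with ω
    rw [Real.norm_eq_abs, abs_of_nonneg (hh_nonneg n ω)]
    have key : (2 * T * |ω|) ^ n / (n.factorial : ℝ) * A ω
        ≤ (2 * T) ^ n / (n.factorial : ℝ) * ((1 + ω ^ (2 * (2 * n))) * A ω) := by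
      rw [mul_pow]
      have : (2 * T) ^ n * |ω| ^ n / (n.factorial : ℝ) * A ω ≤ (2 * T) ^ n * (1 + ω ^ (2 * (2 * n))) / (n.factorial : ℝ) * A ω := by
        apply mul_le_mul_of_nonneg_right _ (hA_nonneg ω)
        apply div_le_div_of_nonneg_right _ (by positivity : (0:ℝ) ≤ ((n.factorial : ℝ) : ℝ))
        · exact mul_le_mul_of_nonneg_left (habs_pow_le n ω) (by positivity)
      calc (2 * T) ^ n * |ω| ^ n / (n.factorial : ℝ) * A ω
          ≤ (2 * T) ^ n * (1 + ω ^ (2 * (2 * n))) / (n.factorial : ℝ) * A ω := this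
        _ = (2 * T) ^ n / (n.factorial : ℝ) * ((1 + ω ^ (2 * (2 * n))) * A ω) := by ring
    calc (2 * T * |ω|) ^ n / (n.factorial : ℝ) * A ω
        ≤ (2 * T) ^ n / (n.factorial : ℝ) * ((1 + ω ^ (2 * (2 * n))) * A ω) := key
      _ ≤ ‖(2 * T) ^ n / (n.factorial : ℝ) * ((1 + ω ^ (2 * (2 * n))) * A ω)‖ := le_abs_self _
  -- bound on each integral
  have hbd0 : (∫ ω : ℝ, A ω) ≤ M := by
    have := hbd 0 Even.zero
    simpa using this
  have hint_bound : ∀ n : ℕ, (∫ ω : ℝ, h n ω) ≤ (2 * T) ^ n / (n.factorial : ℝ) * (M + (C ^ 2) ^ n * M) := by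
    intro n
    have step1 : (∫ ω : ℝ, h n ω) ≤ ∫ ω : ℝ, (2 * T) ^ n / (n.factorial : ℝ) * ((1 + ω ^ (2 * (2 * n))) * A ω) := by
      apply integral_mono (hh_int n) (hdom n)
      intro ω
      rw [hh]
      simp only
      rw [mul_pow]
      have : (2 * T) ^ n * |ω| ^ n / (n.factorial : ℝ) * A ω ≤ (2 * T) ^ n * (1 + ω ^ (2 * (2 * n))) / (n.factorial : ℝ) * A ω := by
        apply mul_le_mul_of_nonneg_right _ (hA_nonneg ω)
        apply div_le_div_of_nonneg_right _ (by positivity : (0:ℝ) ≤ ((n.factorial : ℝ) : ℝ))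
        · exact mul_le_mul_of_nonneg_left (habs_pow_le n ω) (by positivity)
      calc (2 * T) ^ n * |ω| ^ n / (n.factorial : ℝ) * A ω
          ≤ (2 * T) ^ n * (1 + ω ^ (2 * (2 * n))) / (n.factorial : ℝ) * A ω := this
        _ = (2 * T) ^ n / (n.factorial : ℝ) * ((1 + ω ^ (2 * (2 * n))) * A ω) := by ring
    have h0 := hint 0 Even.zero
    simp only [mul_zero, pow_zero, one_mul] at h0
    have h2n := hint (2 * n) (even_two_mul n)
    have step2 : (∫ ω : ℝ, (2 * T) ^ n / (n.factorial : ℝ) * ((1 + ω ^ (2 * (2 * n))) * A ω))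
        = (2 * T) ^ n / (n.factorial : ℝ) * ((∫ ω : ℝ, A ω) + ∫ ω : ℝ, ω ^ (2 * (2 * n)) * A ω) := by
      rw [integral_const_mul, ← integral_add h0 h2n]
      congr 1
      apply integral_congr_ae
      filter_upwards with ω
      ring
    have step3 : (∫ ω : ℝ, ω ^ (2 * (2 * n)) * A ω) ≤ C ^ (2 * n) * M := hbd (2 * n) (even_two_mul n)
    rw [step2] at step1
    calc (∫ ω : ℝ, h n ω) ≤ (2 * T) ^ n / (n.factorial : ℝ) * ((∫ ω : ℝ, A ω) + ∫ ω : ℝ, ω ^ (2 * (2 * n)) * A ω) := step1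
      _ ≤ (2 * T) ^ n / (n.factorial : ℝ) * (M + (C ^ 2) ^ n * M) := by
          apply mul_le_mul_of_nonneg_left _ (by positivity)
          rw [← pow_mul]
          exact add_le_add hbd0 step3
  -- summability of the bounds
  have hsummable : Summable (fun n : ℕ => (2 * T) ^ n / (n.factorial : ℝ) * (M + (C ^ 2) ^ n * M)) := by
    have e1 : Summable (fun n : ℕ => (2 * T) ^ n / (n.factorial : ℝ) * M) :=
      (Real.summable_pow_div_factorial (2 * T)).mul_right M
    have e2 : Summable (fun n : ℕ => (2 * T * C ^ 2) ^ n / (n.factorial : ℝ) * M) :=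
      (Real.summable_pow_div_factorial (2 * T * C ^ 2)).mul_right M
    have : (fun n : ℕ => (2 * T) ^ n / (n.factorial : ℝ) * (M + (C ^ 2) ^ n * M))
        = fun n : ℕ => (2 * T) ^ n / (n.factorial : ℝ) * M + (2 * T * C ^ 2) ^ n / (n.factorial : ℝ) * M := by
      funext n
      rw [mul_pow]
      ring
    rw [this]
    exact e1.add e2
  -- pointwise identity: exp series
  have hpt : ∀ ω : ℝ, Real.exp (2 * T * |ω|) * A ω = ∑' n : ℕ, h n ω := by
    intro ω
    have hexp : Real.exp (2 * T * |ω|) = ∑' n : ℕ, (2 * T * |ω|) ^ n / (n.factorial : ℝ) := by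
      rw [Real.exp_eq_exp_ℝ, NormedSpace.exp_eq_tsum_div]
    rw [hexp, ← tsum_mul_right]
  -- measurability of the target
  have hmeas_target : Measurable (fun ω : ℝ => Real.exp (2 * T * |ω|) * A ω) :=
    ((measurable_const.mul measurable_abs).exp).mul hA_meas
  -- finish via lintegral
  refine ⟨hmeas_target.aestronglyMeasurable, ?_⟩
  rw [hasFiniteIntegral_iff_norm]
  have hnn : ∀ ω : ℝ, 0 ≤ Real.exp (2 * T * |ω|) * A ω := fun ω =>
    mul_nonneg (Real.exp_pos _).le (hA_nonneg ω)
  have key : (∫⁻ ω : ℝ, ENNReal.ofReal ‖Real.exp (2 * T * |ω|) * A ω‖)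
      = ∫⁻ ω : ℝ, ∑' n : ℕ, ENNReal.ofReal (h n ω) := by
    apply lintegral_congr
    intro ω
    rw [Real.norm_eq_abs, abs_of_nonneg (hnn ω), hpt ω]
    exact ENNReal.ofReal_tsum_of_nonneg (fun n => hh_nonneg n ω)
      (by
        apply Summable.mul_right
        exact Real.summable_pow_div_factorial (2 * T * |ω|))
  rw [key, lintegral_tsum (fun n => ((hh_meas n).ennreal_ofReal).aemeasurable)]
  have hterm : ∀ n : ℕ, (∫⁻ ω : ℝ, ENNReal.ofReal (h n ω))
      ≤ ENNReal.ofReal ((2 * T) ^ n / (n.factorial : ℝ) * (M + (C ^ 2) ^ n * M)) := by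
    intro n
    rw [← ofReal_integral_eq_lintegral_ofReal (hh_int n)
      (Filter.Eventually.of_forall (hh_nonneg n))]
    exact ENNReal.ofReal_le_ofReal (hint_bound n)
  calc (∑' n : ℕ, ∫⁻ ω : ℝ, ENNReal.ofReal (h n ω))
      ≤ ∑' n : ℕ, ENNReal.ofReal ((2 * T) ^ n / (n.factorial : ℝ) * (M + (C ^ 2) ^ n * M)) :=
        ENNReal.tsum_le_tsum hterm
    _ = ENNReal.ofReal (∑' n : ℕ, (2 * T) ^ n / (n.factorial : ℝ) * (M + (C ^ 2) ^ n * M)) :=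
        (ENNReal.ofReal_tsum_of_nonneg (fun n => by positivity) hsummable).symm
    _ < ⊤ := ENNReal.ofReal_lt_top
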